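/- Let A ∈ ℝ^{m×U}, c ∈ ℝ^{U}, P ∈ ℝ^{U×L}, y ∈ ℝᵐ and δ_y ∈ ℝᵐ. Set s = c − Aᵀy, s^{new} = c − Aᵀ(y + δ_y), S = Pᵀdiag(s)P and S^{new} = Pᵀdiag(s^{new})P, and H = A·(P S⁻¹ Pᵀ)^{∘2}·Aᵀ. If S is positive definite and S^{new} is positive semidefinite, then ‖S^{-1/2}·S^{new}·S^{-1/2} − I‖_F² = δ_yᵀ H δ_y, i.e., the Frobenius norm of S^{-1/2}S^{new}S^{-1/2} − I equals the local norm ‖δ_y‖_{H}. -/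

import Mathlib

open Matrix

noncomputable def Matrix.PosSemidef.sqrt {n 𝕜 : Type*} [Fintype n] [DecidableEq n] [RCLike 𝕜]
    [PartialOrder 𝕜]
    {A : Matrix n n 𝕜} (hA : A.PosSemidef) : Matrix n n 𝕜 :=
  hA.1.eigenvectorUnitary.1 * diagonal ((↑) ∘ (√·) ∘ hA.1.eigenvalues) *
  (star hA.1.eigenvectorUnitary : Matrix n n 𝕜)

theorem sqrt_mul_self_real {L : ℕ} {A : Matrix (Fin L) (Fin L) ℝ} (hA : A.PosSemidef) :
    hA.sqrt * hA.sqrt = A := by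
  have hU : (star hA.1.eigenvectorUnitary : Matrix (Fin L) (Fin L) ℝ) * hA.1.eigenvectorUnitary.1 = 1 :=
    Unitary.star_mul_self_of_mem hA.1.eigenvectorUnitary.2
  have hD : diagonal ((↑) ∘ (√·) ∘ hA.1.eigenvalues) * diagonal ((↑) ∘ (√·) ∘ hA.1.eigenvalues)
      = diagonal (RCLike.ofReal ∘ hA.1.eigenvalues : Fin L → ℝ) := by
    rw [diagonal_mul_diagonal]
    congr 1; funext i
    simp [Real.mul_self_sqrt (hA.eigenvalues_nonneg i)]
  conv_rhs => rw [hA.1.spectral_theorem]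
  rw [Unitary.conjStarAlgAut_apply]
  unfold Matrix.PosSemidef.sqrt
  calc _ = hA.1.eigenvectorUnitary.1 * diagonal ((↑) ∘ (√·) ∘ hA.1.eigenvalues) *
      ((star hA.1.eigenvectorUnitary : Matrix (Fin L) (Fin L) ℝ) * hA.1.eigenvectorUnitary.1) *
      diagonal ((↑) ∘ (√·) ∘ hA.1.eigenvalues) * (star hA.1.eigenvectorUnitary : Matrix (Fin L) (Fin L) ℝ) := by
        simp only [Matrix.mul_assoc]; rfl
    _ = _ := by rw [hU, Matrix.mul_one, Matrix.mul_assoc _ (diagonal _) (diagonal _), hD]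

theorem sqrt_transpose_real {L : ℕ} {A : Matrix (Fin L) (Fin L) ℝ} (hA : A.PosSemidef) :
    (hA.sqrt)ᵀ = hA.sqrt := by
  unfold Matrix.PosSemidef.sqrt
  rw [transpose_mul, transpose_mul, diagonal_transpose, Matrix.mul_assoc]
  simp [star_eq_conjTranspose, conjTranspose_eq_transpose_of_trivial]

theorem stmt_4 {m U L : ℕ}
    (A : Matrix (Fin m) (Fin U) ℝ) (c : Fin U → ℝ) (P : Matrix (Fin U) (Fin L) ℝ)
    (y δy : Fin m → ℝ) (s snew : Fin U → ℝ)
    (hs : s = c - Aᵀ.mulVec y) (hsnew : snew = c - Aᵀ.mulVec (y + δy))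
    (S Snew : Matrix (Fin L) (Fin L) ℝ)
    (hS : S = Pᵀ * Matrix.diagonal s * P)
    (hSnew : Snew = Pᵀ * Matrix.diagonal snew * P)
    (H : Matrix (Fin m) (Fin m) ℝ)
    (hH : H = A * ((P * S⁻¹ * Pᵀ) ⊙ (P * S⁻¹ * Pᵀ)) * Aᵀ)
    (hSpd : S.PosDef) (hSnewpsd : Snew.PosSemidef) :
    ∑ i, ∑ j, (((hSpd.posSemidef.sqrt)⁻¹ * Snew * (hSpd.posSemidef.sqrt)⁻¹ - 1) i j) ^ 2
      = δy ⬝ᵥ H.mulVec δy := by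
  set Q := hSpd.posSemidef.sqrt with hQdef
  have hQQ : Q * Q = S := sqrt_mul_self_real hSpd.posSemidef
  have hQsym : Qᵀ = Q := by
    exact sqrt_transpose_real hSpd.posSemidef
  have hSsym : Sᵀ = S := by
    have := hSpd.isHermitian
    rwa [Matrix.IsHermitian, conjTranspose_eq_transpose_of_trivial] at this
  have hdetS : IsUnit S.det := isUnit_iff_ne_zero.mpr (ne_of_gt hSpd.det_pos)
  have hdetQ : IsUnit Q.det := by
    have h : Q.det * Q.det = S.det := by rw [← det_mul, hQQ]
    exact isUnit_of_mul_isUnit_left (h ▸ hdetS)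
  have hQl : Q⁻¹ * Q = 1 := nonsing_inv_mul Q hdetQ
  have hQr : Q * Q⁻¹ = 1 := mul_nonsing_inv Q hdetQ
  have hT : Q⁻¹ * Q⁻¹ = S⁻¹ := by rw [← hQQ, Matrix.mul_inv_rev]
  set d : Fin U → ℝ := Aᵀ.mulVec δy with hd
  have hsd : snew = s - d := by
    rw [hs, hsnew, hd, mulVec_add]; abel
  set N : Matrix (Fin L) (Fin L) ℝ := Pᵀ * Matrix.diagonal d * P with hN
  have hds : Matrix.diagonal (s - d) = Matrix.diagonal s - Matrix.diagonal d :=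
    (diagonal_sub s d).symm
  have hSnewS : Snew = S - N := by
    rw [hSnew, hS, hN, hsd, hds, Matrix.mul_sub, Matrix.sub_mul]
  set Y : Matrix (Fin L) (Fin L) ℝ := Q⁻¹ * N * Q⁻¹ with hY
  have hX : Q⁻¹ * Snew * Q⁻¹ - 1 = -Y := by
    rw [hSnewS, Matrix.mul_sub, Matrix.sub_mul, hY]
    have h1 : Q⁻¹ * S * Q⁻¹ = 1 := by
      rw [← hQQ, ← mul_assoc, mul_assoc _ Q Q⁻¹, hQr, mul_one, hQl]
    rw [h1]; abel
  have hRsym : (Q⁻¹)ᵀ = Q⁻¹ := by rw [transpose_nonsing_inv, hQsym]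
  have hNsym : Nᵀ = N := by
    rw [hN, transpose_mul, transpose_mul, transpose_transpose, diagonal_transpose,
      ← Matrix.mul_assoc]
  have hYsym : Yᵀ = Y := by
    rw [hY, transpose_mul, transpose_mul, hRsym, hNsym, ← mul_assoc]
  have hYs : ∀ i j, Y j i = Y i j := fun i j => by
    rw [← Matrix.transpose_apply Y i j, hYsym]
  set M : Matrix (Fin U) (Fin U) ℝ := P * S⁻¹ * Pᵀ with hM
  have hSisym : (S⁻¹)ᵀ = S⁻¹ := by rw [transpose_nonsing_inv, hSsym]
  have hMsym : Mᵀ = M := by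
    rw [hM, transpose_mul, transpose_mul, transpose_transpose, hSisym, ← Matrix.mul_assoc]
  have hMs : ∀ i j, M j i = M i j := fun i j => by
    rw [← Matrix.transpose_apply M i j, hMsym]
  -- LHS as trace
  have lhs_eq : ∑ i, ∑ j, ((Q⁻¹ * Snew * Q⁻¹ - 1) i j) ^ 2 = trace (Y * Y) := by
    rw [hX]
    simp only [Matrix.neg_apply, neg_sq, trace, Matrix.diag, mul_apply]
    refine Finset.sum_congr rfl fun i _ => Finset.sum_congr rfl fun j _ => ?_
    rw [hYs j i]; ring
  -- trace (Y*Y) = trace (D*M*(D*M))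
  have hYY : Y * Y = Q⁻¹ * (N * (S⁻¹ * (N * Q⁻¹))) := by
    rw [hY, ← hT]; noncomm_ring
  have hC : (N * (S⁻¹ * (N * Q⁻¹))) * Q⁻¹ = N * (S⁻¹ * (N * S⁻¹)) := by
    rw [← hT]; noncomm_ring
  have hD2 : N * (S⁻¹ * (N * S⁻¹))
      = Pᵀ * (Matrix.diagonal d * (P * (S⁻¹ * (Pᵀ * (Matrix.diagonal d * (P * S⁻¹)))))) := by
    rw [hN]; simp only [Matrix.mul_assoc]
  have hF : (Matrix.diagonal d * (P * (S⁻¹ * (Pᵀ * (Matrix.diagonal d * (P * S⁻¹)))))) * Pᵀ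
      = Matrix.diagonal d * M * (Matrix.diagonal d * M) := by
    rw [hM]; simp only [Matrix.mul_assoc]
  have tr1 : trace (Y * Y) = trace (Matrix.diagonal d * M * (Matrix.diagonal d * M)) := by
    rw [hYY, trace_mul_comm, hC, hD2, trace_mul_comm, hF]
  -- RHS
  have rhs_eq : δy ⬝ᵥ H.mulVec δy = d ⬝ᵥ (M ⊙ M).mulVec d := by
    rw [hH, Matrix.mul_assoc, ← Matrix.mulVec_mulVec, ← Matrix.mulVec_mulVec,
      dotProduct_mulVec, ← mulVec_transpose, ← hd]
  rw [lhs_eq, tr1, rhs_eq]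
  -- entrywise computation
  have key : ∀ i : Fin U, (Matrix.diagonal d * M * (Matrix.diagonal d * M)) i i
      = ∑ j, (d i * M i j) * (d j * M j i) := by
    intro i
    rw [Matrix.mul_apply]
    exact Finset.sum_congr rfl fun j _ => by rw [diagonal_mul, diagonal_mul]
  simp only [trace, Matrix.diag, key, dotProduct, Matrix.mulVec,
    Matrix.hadamard_apply, Finset.mul_sum]
  refine Finset.sum_congr rfl fun i _ => Finset.sum_congr rfl fun j _ => ?_
  rw [hMs j i]; ring
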